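/- For n ≥ 2 and 0 ≤ q ≤ n-1, the q-th reduced homology of X(n) with integer coefficients is free abelian of rank β(n,q), where β(n,q) is the number of partitions of {1,...,n} into q+1 blocks each of which is a proper subset of size at least 2. -/

import Mathlib

/-- A face of `X(n)`: a set of pairwise disjoint proper nonempty subsets of `{1,…,n}`. -/
def IsFace (n : ℕ) (σ : Finset (Finset (Fin n))) : Prop :=
  (∀ x ∈ σ, x.Nonempty ∧ x ≠ Finset.univ) ∧
  ((σ : Set (Finset (Fin n))).Pairwise fun a b => Disjoint a b)

/-- The faces of `X(n)` with exactly `q` blocks (dimension `q-1`); `q = 0` gives the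
empty face, so these chain groups compute *reduced* homology. -/
abbrev Faces (n q : ℕ) := {σ : Finset (Finset (Fin n)) // IsFace n σ ∧ σ.card = q}

/-- The group of (reduced, shifted) simplicial `q`-chains of `X(n)`. -/
abbrev Cc (n q : ℕ) := Faces n q →₀ ℤ

/-- A sorting key on blocks, fixing a total order of the vertices of `X(n)`:
first by decreasing size, then lexicographically. -/
def keyB (n : ℕ) (s : Finset (Fin n)) : ℕ :=
  (n - s.card) * 4 ^ n + ∑ i ∈ s, 2 ^ (i : ℕ)

lemma IsFace.erase {n : ℕ} {σ : Finset (Finset (Fin n))} (h : IsFace n σ)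
    (b : Finset (Fin n)) : IsFace n (σ.erase b) :=
  ⟨fun x hx => h.1 x (Finset.mem_of_mem_erase hx),
   h.2.mono (by simp)⟩

/-- The simplicial boundary map, with signs determined by listing the blocks of a face
in increasing `keyB`-order. -/
noncomputable def bdry (n q : ℕ) : Cc n (q + 1) →ₗ[ℤ] Cc n q :=
  Finsupp.lift (Cc n q) ℤ (Faces n (q + 1)) fun σ =>
    ∑ b ∈ σ.1.attach,
      ((-1 : ℤ) ^ (σ.1.filter fun c => keyB n c < keyB n b.1).card) •
        Finsupp.single
          (⟨σ.1.erase b.1,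
            σ.2.1.erase b.1,
            by rw [Finset.card_erase_of_mem b.2, σ.2.2]; rfl⟩ : Faces n q) 1

/-- The `q`-th reduced homology of `X(n)` with integer coefficients:
cycles modulo boundaries. -/
noncomputable def Hred (n q : ℕ) : Type :=
  LinearMap.ker (bdry n q) ⧸
    Submodule.comap (LinearMap.ker (bdry n q)).subtype (LinearMap.range (bdry n (q + 1)))

noncomputable instance (n q : ℕ) : AddCommGroup (Hred n q) :=
  inferInstanceAs (AddCommGroup (LinearMap.ker (bdry n q) ⧸
    Submodule.comap (LinearMap.ker (bdry n q)).subtype (LinearMap.range (bdry n (q + 1)))))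

noncomputable instance (n q : ℕ) : Module ℤ (Hred n q) :=
  inferInstanceAs (Module ℤ (LinearMap.ker (bdry n q) ⧸
    Submodule.comap (LinearMap.ker (bdry n q)).subtype (LinearMap.range (bdry n (q + 1)))))

/-- `β(n,q)`: partitions of `{1,…,n}` into `q+1` proper blocks of size at least 2. -/
noncomputable def betaP (n q : ℕ) : ℕ :=
  Nat.card {σ : Finset (Finset (Fin n)) //
    σ.card = q + 1 ∧ (∀ x ∈ σ, 2 ≤ x.card ∧ x ≠ Finset.univ) ∧
    ((σ : Set (Finset (Fin n))).Pairwise fun a b => Disjoint a b) ∧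
    σ.sup id = Finset.univ}

open Finset Finsupp

namespace X7

variable {n : ℕ}

/-- The set of vertices covered by the blocks of `σ`. -/
def cov (σ : Finset (Finset (Fin n))) : Finset (Fin n) := σ.sup id

lemma mem_cov {σ : Finset (Finset (Fin n))} {m : Fin n} :
    m ∈ cov σ ↔ ∃ b ∈ σ, m ∈ b := by
  simp [cov, Finset.mem_sup]

/-- Vertices that are uncovered or form a singleton block. -/
def Sset (σ : Finset (Finset (Fin n))) : Finset (Fin n) :=
  Finset.univ.filter fun m => ({m} : Finset (Fin n)) ∈ σ ∨ m ∉ cov σ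

lemma mem_Sset {σ : Finset (Finset (Fin n))} {m : Fin n} :
    m ∈ Sset σ ↔ ({m} : Finset (Fin n)) ∈ σ ∨ m ∉ cov σ := by
  simp [Sset]

/-- Critical faces: no uncovered vertex and no singleton block. -/
def Crit (σ : Finset (Finset (Fin n))) : Prop := Sset σ = ∅

/-- Up-matched faces: the minimal special vertex is uncovered. -/
def Up (σ : Finset (Finset (Fin n))) : Prop :=
  ∃ h : (Sset σ).Nonempty, (Sset σ).min' h ∉ cov σ

/-- The number of non-singleton blocks. -/
def nk (σ : Finset (Finset (Fin n))) : ℕ := (σ.filter fun c => 2 ≤ c.card).card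

/-- The measure used to show nilpotence of the discrete gradient flow. -/
noncomputable def mu (σ : Finset (Finset (Fin n))) : ℕ :=
  if h : (Sset σ).Nonempty then
    2 * ((Sset σ).min' h : ℕ) + (if ({(Sset σ).min' h} : Finset (Fin n)) ∈ σ then 0 else 1)
  else 0

lemma mu_lt (σ : Finset (Finset (Fin n))) : mu σ < 2 * n + 1 := by
  unfold mu
  split
  · rename_i h
    have := ((Sset σ).min' h).isLt
    split <;> omega
  · omega

lemma not_mem_of_not_mem_cov {σ : Finset (Finset (Fin n))} {m : Fin n}
    (h : m ∉ cov σ) {b : Finset (Fin n)} (hb : b ∈ σ) : m ∉ b := by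
  intro hm
  exact h (mem_cov.2 ⟨b, hb, hm⟩)

lemma singleton_not_mem_of_not_mem_cov {σ : Finset (Finset (Fin n))} {m : Fin n}
    (h : m ∉ cov σ) : ({m} : Finset (Fin n)) ∉ σ :=
  fun hm => not_mem_of_not_mem_cov h hm (mem_singleton_self m)

lemma cov_erase_subset (σ : Finset (Finset (Fin n))) (b : Finset (Fin n)) :
    cov (σ.erase b) ⊆ cov σ := by
  intro x hx
  obtain ⟨c, hc, hxc⟩ := mem_cov.1 hx
  exact mem_cov.2 ⟨c, mem_of_mem_erase hc, hxc⟩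

lemma not_mem_cov_erase {σ : Finset (Finset (Fin n))} (hf : IsFace n σ)
    {b : Finset (Fin n)} (hb : b ∈ σ) {m : Fin n} (hm : m ∈ b) :
    m ∉ cov (σ.erase b) := by
  intro hc
  obtain ⟨c, hc1, hc2⟩ := mem_cov.1 hc
  have hcσ : c ∈ σ := mem_of_mem_erase hc1
  have hne : c ≠ b := ne_of_mem_erase hc1
  have := hf.2 hcσ hb hne
  exact (Finset.disjoint_left.1 this) hc2 hm

lemma Sset_erase {σ : Finset (Finset (Fin n))} (hf : IsFace n σ)
    {b : Finset (Fin n)} (hb : b ∈ σ) :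
    Sset (σ.erase b) = Sset σ ∪ b := by
  ext m
  simp only [mem_Sset, mem_union]
  constructor
  · rintro (hs | hs)
    · exact Or.inl (Or.inl (mem_of_mem_erase hs))
    · by_cases hmb : m ∈ b
      · exact Or.inr hmb
      · left; right
        intro hc
        obtain ⟨c, hc1, hc2⟩ := mem_cov.1 hc
        have : c ∈ σ.erase b := mem_erase.2 ⟨fun h => hmb (h ▸ hc2), hc1⟩
        exact hs (mem_cov.2 ⟨c, this, hc2⟩)
  · rintro ((hs | hs) | hs)
    · by_cases hbs : b = ({m} : Finset (Fin n))
      · right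
        subst hbs
        exact not_mem_cov_erase hf hb (mem_singleton_self m)
      · exact Or.inl (mem_erase.2 ⟨fun h => hbs h.symm, hs⟩)
    · exact Or.inr fun hc => hs (cov_erase_subset σ b hc)
    · exact Or.inr (not_mem_cov_erase hf hb hs)

lemma Sset_subset_erase {σ : Finset (Finset (Fin n))} (hf : IsFace n σ)
    {b : Finset (Fin n)} (hb : b ∈ σ) : Sset σ ⊆ Sset (σ.erase b) := by
  rw [Sset_erase hf hb]; exact subset_union_left

lemma cov_insert (b : Finset (Fin n)) (σ : Finset (Finset (Fin n))) :
    cov (insert b σ) = b ∪ cov σ := by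
  simp [cov, Finset.sup_insert, Finset.sup_eq_union]

lemma Sset_insert_singleton {σ : Finset (Finset (Fin n))} {m : Fin n}
    (hm : m ∉ cov σ) :
    Sset (insert ({m} : Finset (Fin n)) σ) = Sset σ := by
  ext m'
  simp only [mem_Sset, mem_insert, cov_insert, mem_union, mem_singleton]
  constructor
  · rintro (hs | hs)
    · rcases hs with hs | hs
      · have : m' = m := by
          have := congrArg (m' ∈ ·) hs
          simp at this
          exact this
        subst this; exact Or.inr hm
      · exact Or.inl hs
    · push_neg at hs
      exact Or.inr hs.2
  · rintro (hs | hs)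
    · exact Or.inl (Or.inr hs)
    · by_cases hmm : m' = m
      · subst hmm; exact Or.inl (Or.inl rfl)
      · right; push_neg; exact ⟨fun h => hmm (by simpa using h), hs⟩

lemma IsFace.insert_singleton (hn : 2 ≤ n) {σ : Finset (Finset (Fin n))}
    (hf : IsFace n σ) {m : Fin n} (hm : m ∉ cov σ) :
    IsFace n (insert ({m} : Finset (Fin n)) σ) := by
  constructor
  · intro x hx
    rcases mem_insert.1 hx with h | h
    · subst h
      refine ⟨singleton_nonempty m, fun h => ?_⟩
      have := congrArg Finset.card h
      simp [card_univ] at this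
      omega
    · exact hf.1 x h
  · rw [coe_insert]
    refine Set.Pairwise.insert hf.2 ?_
    intro c hc hne
    have : Disjoint ({m} : Finset (Fin n)) c := by
      rw [Finset.disjoint_singleton_left]
      exact not_mem_of_not_mem_cov hm hc
    exact ⟨this, this.symm⟩

end X7

namespace X7

variable {n : ℕ}

lemma sum_range_two_pow (M : ℕ) : ∑ j ∈ Finset.range M, 2 ^ j < 2 ^ M := by
  induction M with
  | zero => simp
  | succ m ih =>
    rw [Finset.sum_range_succ, pow_succ]
    omega

lemma sum_two_pow_lt {c : Finset (Fin n)} {M : ℕ} (h : ∀ i ∈ c, (i : ℕ) < M) :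
    ∑ i ∈ c, 2 ^ (i : ℕ) < 2 ^ M := by
  have h1 : ∑ i ∈ c, 2 ^ (i : ℕ) = ∑ j ∈ c.image (fun i : Fin n => (i : ℕ)), 2 ^ j :=
    (Finset.sum_image (by intro x _ y _ hxy; exact Fin.val_injective hxy)).symm
  have h2 : c.image (fun i : Fin n => (i : ℕ)) ⊆ Finset.range M := by
    intro j hj
    obtain ⟨i, hi, rfl⟩ := Finset.mem_image.1 hj
    exact Finset.mem_range.2 (h i hi)
  calc ∑ i ∈ c, 2 ^ (i : ℕ) ≤ ∑ j ∈ Finset.range M, 2 ^ j := by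
        rw [h1]; exact Finset.sum_le_sum_of_subset h2
    _ < 2 ^ M := sum_range_two_pow M

lemma keyB_singleton (m : Fin n) : keyB n ({m} : Finset (Fin n)) = (n - 1) * 4 ^ n + 2 ^ (m : ℕ) := by
  simp [keyB]

lemma keyB_lt_singleton {b : Finset (Fin n)} (hb : 2 ≤ b.card) (m : Fin n) :
    keyB n b < keyB n ({m} : Finset (Fin n)) := by
  have hcard : b.card ≤ n := le_trans (Finset.card_le_card (Finset.subset_univ b)) (by simp)
  have hn2 : 2 ≤ n := le_trans hb hcard
  have hsum : ∑ i ∈ b, 2 ^ (i : ℕ) < 4 ^ n := by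
    calc ∑ i ∈ b, 2 ^ (i : ℕ) < 2 ^ n := sum_two_pow_lt (fun i _ => i.isLt)
      _ ≤ 4 ^ n := Nat.pow_le_pow_left (by norm_num) n
  rw [keyB_singleton, keyB]
  have h2 : (n - b.card) * 4 ^ n + 4 ^ n ≤ (n - 1) * 4 ^ n := by
    have h3 : (n - b.card) * 4 ^ n + 4 ^ n = (n - b.card + 1) * 4 ^ n := by ring
    rw [h3]
    exact Nat.mul_le_mul_right _ (by omega)
  calc (n - b.card) * 4 ^ n + ∑ i ∈ b, 2 ^ (i : ℕ)
      < (n - b.card) * 4 ^ n + 4 ^ n := by omega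
    _ ≤ (n - 1) * 4 ^ n := h2
    _ ≤ (n - 1) * 4 ^ n + 2 ^ (m : ℕ) := Nat.le_add_right _ _

lemma keyB_singleton_lt_singleton {a b : Fin n} :
    keyB n ({a} : Finset (Fin n)) < keyB n ({b} : Finset (Fin n)) ↔ (a : ℕ) < (b : ℕ) := by
  rw [keyB_singleton, keyB_singleton, Nat.add_lt_add_iff_left, Nat.pow_lt_pow_iff_right (by norm_num)]

lemma keyB_eq_iff {b c : Finset (Fin n)} (h : keyB n b = keyB n c) :
    b.card = c.card ∧ ∑ i ∈ b, 2 ^ (i : ℕ) = ∑ i ∈ c, 2 ^ (i : ℕ) := by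
  have hb4 : ∑ i ∈ b, 2 ^ (i : ℕ) < 4 ^ n :=
    lt_of_lt_of_le (sum_two_pow_lt (fun i _ => i.isLt)) (Nat.pow_le_pow_left (by norm_num) n)
  have hc4 : ∑ i ∈ c, 2 ^ (i : ℕ) < 4 ^ n :=
    lt_of_lt_of_le (sum_two_pow_lt (fun i _ => i.isLt)) (Nat.pow_le_pow_left (by norm_num) n)
  have hbn : b.card ≤ n := le_trans (Finset.card_le_card (Finset.subset_univ b)) (by simp)
  have hcn : c.card ≤ n := le_trans (Finset.card_le_card (Finset.subset_univ c)) (by simp)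
  unfold keyB at h
  have h4 : 0 < 4 ^ n := Nat.pow_pos (by norm_num)
  have hd : n - b.card = n - c.card := by
    have hb' : ((n - b.card) * 4 ^ n + ∑ i ∈ b, 2 ^ (i : ℕ)) / 4 ^ n = n - b.card := by
      rw [add_comm, Nat.add_mul_div_right _ _ h4, Nat.div_eq_of_lt hb4, zero_add]
    have hc' : ((n - c.card) * 4 ^ n + ∑ i ∈ c, 2 ^ (i : ℕ)) / 4 ^ n = n - c.card := by
      rw [add_comm, Nat.add_mul_div_right _ _ h4, Nat.div_eq_of_lt hc4, zero_add]
    rw [← hb', ← hc', h]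
  have : b.card = c.card := by omega
  refine ⟨this, ?_⟩
  rw [this] at h
  omega

lemma sum_two_pow_ne {b c : Finset (Fin n)} (hd : Disjoint b c) (hb : b.Nonempty)
    (hc : c.Nonempty) : ∑ i ∈ b, 2 ^ (i : ℕ) ≠ ∑ i ∈ c, 2 ^ (i : ℕ) := by
  have hu : (b ∪ c).Nonempty := Finset.Nonempty.inl hb
  set M := (b ∪ c).max' hu with hM
  have hMmem : M ∈ b ∪ c := Finset.max'_mem _ hu
  have hle : ∀ i ∈ b ∪ c, i ≤ M := fun i hi => Finset.le_max' _ i hi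
  rcases Finset.mem_union.1 hMmem with hMb | hMc
  · -- M ∈ b, so sum over b ≥ 2^M > sum over c
    intro heq
    have hMc' : M ∉ c := Finset.disjoint_left.1 hd hMb
    have h1 : 2 ^ (M : ℕ) ≤ ∑ i ∈ b, 2 ^ (i : ℕ) :=
      Finset.single_le_sum (f := fun i : Fin n => 2 ^ (i : ℕ)) (fun i _ => Nat.zero_le _) hMb
    have h2 : ∑ i ∈ c, 2 ^ (i : ℕ) < 2 ^ (M : ℕ) := by
      apply sum_two_pow_lt
      intro i hi
      have : i ≤ M := hle i (Finset.mem_union_right b hi)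
      have : i ≠ M := fun h => hMc' (h ▸ hi)
      have : i < M := lt_of_le_of_ne (hle i (Finset.mem_union_right b hi)) this
      exact this
    omega
  · intro heq
    have hMb' : M ∉ b := Finset.disjoint_right.1 hd hMc
    have h1 : 2 ^ (M : ℕ) ≤ ∑ i ∈ c, 2 ^ (i : ℕ) :=
      Finset.single_le_sum (f := fun i : Fin n => 2 ^ (i : ℕ)) (fun i _ => Nat.zero_le _) hMc
    have h2 : ∑ i ∈ b, 2 ^ (i : ℕ) < 2 ^ (M : ℕ) := by
      apply sum_two_pow_lt
      intro i hi
      have hne2 : i ≠ M := fun h => hMb' (h ▸ hi)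
      have h3 : i < M := lt_of_le_of_ne (hle i (Finset.mem_union_left c hi)) hne2
      exact h3
    omega

lemma keyB_ne {b c : Finset (Fin n)} (hd : Disjoint b c) (hb : b.Nonempty)
    (hc : c.Nonempty) (hne : b ≠ c) : keyB n b ≠ keyB n c := by
  intro h
  exact sum_two_pow_ne hd hb hc (keyB_eq_iff h).2

end X7

namespace X7

variable {n : ℕ}

lemma filter_keyB_singleton {σ : Finset (Finset (Fin n))} (hbl : ∀ x ∈ σ, x.Nonempty)
    {m : Fin n} (hmin : ∀ m' : Fin n, ({m'} : Finset (Fin n)) ∈ σ → m ≤ m') :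
    (σ.filter fun c => keyB n c < keyB n ({m} : Finset (Fin n)))
      = σ.filter fun c => 2 ≤ c.card := by
  apply Finset.filter_congr
  intro c hc
  have h1 : 1 ≤ c.card := Finset.card_pos.2 (hbl c hc)
  constructor
  · intro hk
    by_contra hc2
    have hc1 : c.card = 1 := by omega
    obtain ⟨m', rfl⟩ := Finset.card_eq_one.1 hc1
    have := hmin m' hc
    rw [keyB_singleton_lt_singleton] at hk
    have : (m : ℕ) ≤ (m' : ℕ) := this
    omega
  · intro hc2
    exact keyB_lt_singleton hc2 m

lemma nk_erase_singleton (σ : Finset (Finset (Fin n))) (m : Fin n) :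
    nk (σ.erase ({m} : Finset (Fin n))) = nk σ := by
  unfold nk
  rw [Finset.filter_erase, Finset.erase_eq_of_notMem]
  intro h
  have := (Finset.mem_filter.1 h).2
  simp at this

lemma nk_insert_singleton {σ : Finset (Finset (Fin n))} {m : Fin n}
    (hm : ({m} : Finset (Fin n)) ∉ σ) :
    nk (insert ({m} : Finset (Fin n)) σ) = nk σ := by
  unfold nk
  rw [Finset.filter_insert]
  rw [if_neg (by simp)]

/-- The face obtained by inserting the singleton on the minimal special vertex. -/
def upF {d : ℕ} (hn : 2 ≤ n) (σ : Faces n d) (hu : Up σ.1) : Faces n (d + 1) :=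
  ⟨insert ({(Sset σ.1).min' hu.choose} : Finset (Fin n)) σ.1,
    IsFace.insert_singleton hn σ.2.1 hu.choose_spec,
    by rw [Finset.card_insert_of_notMem (singleton_not_mem_of_not_mem_cov hu.choose_spec), σ.2.2]⟩

open scoped Classical in
/-- The matching homotopy `h`. -/
noncomputable def hh (hn : 2 ≤ n) (d : ℕ) : Cc n d →ₗ[ℤ] Cc n (d + 1) :=
  Finsupp.lift _ ℤ _ fun σ =>
    if hu : Up σ.1 then ((-1 : ℤ) ^ nk σ.1) • Finsupp.single (upF hn σ hu) 1 else 0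

open scoped Classical in
lemma hh_single (hn : 2 ≤ n) {d : ℕ} (σ : Faces n d) :
    hh hn d (Finsupp.single σ 1)
      = if hu : Up σ.1 then ((-1 : ℤ) ^ nk σ.1) • Finsupp.single (upF hn σ hu) 1 else 0 := by
  rw [hh, Finsupp.lift_apply, Finsupp.sum_single_index] <;> simp

/-- The face obtained by removing a block. -/
def eF {q : ℕ} (σ : Faces n (q + 1)) (b : {x // x ∈ σ.1}) : Faces n q :=
  ⟨σ.1.erase b.1, σ.2.1.erase b.1,
    by rw [Finset.card_erase_of_mem b.2, σ.2.2]; rfl⟩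

lemma bdry_single {q : ℕ} (σ : Faces n (q + 1)) :
    bdry n q (Finsupp.single σ 1)
      = ∑ b ∈ σ.1.attach,
          ((-1 : ℤ) ^ (σ.1.filter fun c => keyB n c < keyB n b.1).card) •
            Finsupp.single (eF σ b) 1 := by
  rw [bdry, Finsupp.lift_apply, Finsupp.sum_single_index, one_smul]
  · rfl
  · simp

noncomputable def PP (hn : 2 ≤ n) : ∀ d, Cc n d →ₗ[ℤ] Cc n d
  | 0 => LinearMap.id - (bdry n 0).comp (hh hn 0)
  | (d + 1) => LinearMap.id - (bdry n (d + 1)).comp (hh hn (d + 1))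
      - (hh hn d).comp (bdry n d)

end X7

namespace X7

variable {n : ℕ}

/-- Position count of a block among the blocks of smaller key. -/
def pos (s : Finset (Finset (Fin n))) (x : Finset (Fin n)) : ℕ :=
  (s.filter fun c => keyB n c < keyB n x).card

open scoped Classical in
/-- Generator of `Cc n q` on a finset, or `0` if it is not a `q`-blocks face. -/
noncomputable def δ (q : ℕ) (τ : Finset (Finset (Fin n))) : Cc n q :=
  if h : IsFace n τ ∧ τ.card = q then Finsupp.single (⟨τ, h⟩ : Faces n q) 1 else 0

lemma δ_face {q : ℕ} (τ : Finset (Finset (Fin n))) (h : IsFace n τ ∧ τ.card = q) :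
    δ q τ = Finsupp.single (⟨τ, h⟩ : Faces n q) 1 := by
  rw [δ, dif_pos h]

lemma single_eq_δ {q : ℕ} (σ : Faces n q) : Finsupp.single σ (1 : ℤ) = δ q σ.1 := by
  rw [δ_face σ.1 σ.2]

lemma erase_comm' (s : Finset (Finset (Fin n))) (a b : Finset (Fin n)) :
    (s.erase a).erase b = (s.erase b).erase a := by
  ext x
  simp only [Finset.mem_erase]
  tauto

lemma bdry_single' {q : ℕ} (σ : Faces n (q + 1)) :
    bdry n q (Finsupp.single σ 1)
      = ∑ b ∈ σ.1, ((-1 : ℤ) ^ pos σ.1 b) • δ q (σ.1.erase b) := by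
  rw [bdry_single]
  rw [← Finset.sum_attach σ.1 (fun b => ((-1 : ℤ) ^ pos σ.1 b) • δ q (σ.1.erase b))]
  apply Finset.sum_congr rfl
  intro b _
  congr 1
  rw [δ_face (σ.1.erase b.1) ⟨σ.2.1.erase b.1, by rw [Finset.card_erase_of_mem b.2, σ.2.2]; rfl⟩]
  rfl

lemma bdry_δ {q : ℕ} (τ : Finset (Finset (Fin n))) (hf : IsFace n τ) (hc : τ.card = q + 1) :
    bdry n q (δ (q + 1) τ) = ∑ c ∈ τ, ((-1 : ℤ) ^ pos τ c) • δ q (τ.erase c) := by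
  rw [δ_face τ ⟨hf, hc⟩, bdry_single']

lemma pos_erase_of_lt {s : Finset (Finset (Fin n))} {b c : Finset (Fin n)}
    (hb : b ∈ s) (h : keyB n b < keyB n c) :
    pos (s.erase b) c + 1 = pos s c := by
  unfold pos
  rw [Finset.filter_erase, Finset.card_erase_of_mem (Finset.mem_filter.2 ⟨hb, h⟩)]
  have : 0 < (s.filter fun x => keyB n x < keyB n c).card :=
    Finset.card_pos.2 ⟨b, Finset.mem_filter.2 ⟨hb, h⟩⟩
  omega

lemma pos_erase_of_not_lt {s : Finset (Finset (Fin n))} {b c : Finset (Fin n)}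
    (h : ¬ keyB n b < keyB n c) :
    pos (s.erase b) c = pos s c := by
  unfold pos
  rw [Finset.filter_erase, Finset.erase_eq_of_notMem]
  intro hmem
  exact h (Finset.mem_filter.1 hmem).2

lemma sign_cancel {σ : Finset (Finset (Fin n))} (hf : IsFace n σ) {b c : Finset (Fin n)}
    (hb : b ∈ σ) (hc : c ∈ σ) (hbc : b ≠ c) :
    ((-1 : ℤ) ^ pos σ b) * (-1 : ℤ) ^ pos (σ.erase b) c
      + ((-1 : ℤ) ^ pos σ c) * (-1 : ℤ) ^ pos (σ.erase c) b = 0 := by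
  have hne : keyB n b ≠ keyB n c :=
    keyB_ne (hf.2 hb hc hbc) (hf.1 b hb).1 (hf.1 c hc).1 hbc
  rcases lt_or_gt_of_ne hne with hlt | hgt
  · have e1 : pos (σ.erase b) c + 1 = pos σ c := pos_erase_of_lt hb hlt
    have e2 : pos (σ.erase c) b = pos σ b := pos_erase_of_not_lt (by omega)
    rw [e2, ← e1, pow_succ]
    ring
  · have e1 : pos (σ.erase c) b + 1 = pos σ b := pos_erase_of_lt hc hgt
    have e2 : pos (σ.erase b) c = pos σ c := pos_erase_of_not_lt (by omega)
    rw [e2, ← e1, pow_succ]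
    ring

lemma bdry_bdry_single (q : ℕ) (σ : Faces n (q + 1 + 1)) :
    bdry n q (bdry n (q + 1) (Finsupp.single σ 1)) = 0 := by
  rw [bdry_single', map_sum]
  have key : ∀ b ∈ σ.1,
      bdry n q (((-1 : ℤ) ^ pos σ.1 b) • δ (q + 1) (σ.1.erase b))
        = ∑ c ∈ σ.1.erase b,
            (((-1 : ℤ) ^ pos σ.1 b) * ((-1 : ℤ) ^ pos (σ.1.erase b) c)) •
              δ q ((σ.1.erase b).erase c) := by
    intro b hb
    rw [map_smul, bdry_δ (σ.1.erase b) (σ.2.1.erase b)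
      (by rw [Finset.card_erase_of_mem hb, σ.2.2]; rfl), Finset.smul_sum]
    apply Finset.sum_congr rfl
    intro c _
    rw [smul_smul]
  rw [Finset.sum_congr rfl key]
  rw [Finset.sum_sigma']
  apply Finset.sum_involution
    (fun p _ => (⟨p.2, p.1⟩ : (_ : Finset (Fin n)) × Finset (Fin n)))
  · intro p hp
    rw [Finset.mem_sigma] at hp
    obtain ⟨h1, h2⟩ := hp
    have hne : p.2 ≠ p.1 := Finset.ne_of_mem_erase h2
    have h2' : p.2 ∈ σ.1 := Finset.mem_of_mem_erase h2
    have : δ q ((σ.1.erase p.1).erase p.2) = δ q ((σ.1.erase p.2).erase p.1) := by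
      rw [erase_comm']
    rw [this, ← add_smul]
    rw [sign_cancel σ.2.1 h1 h2' (Ne.symm hne), zero_smul]
  · intro p hp _
    rw [Finset.mem_sigma] at hp
    have hne : p.2 ≠ p.1 := Finset.ne_of_mem_erase hp.2
    intro hcon
    exact hne (congrArg Sigma.fst hcon)
  · intro p hp
    rw [Finset.mem_sigma] at hp ⊢
    exact ⟨Finset.mem_of_mem_erase hp.2,
      Finset.mem_erase.2 ⟨(Finset.ne_of_mem_erase hp.2).symm, hp.1⟩⟩
  · intro p hp
    rfl

lemma bdry_bdry (q : ℕ) : (bdry n q).comp (bdry n (q + 1)) = 0 := by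
  apply Finsupp.lhom_ext'
  intro σ
  apply LinearMap.ext_ring
  simp only [LinearMap.comp_apply, Finsupp.lsingle_apply, LinearMap.zero_apply]
  exact bdry_bdry_single q σ

end X7

namespace X7

variable {n : ℕ}

lemma Sset_nonempty_of_not_crit {σ : Finset (Finset (Fin n))} (h : ¬ Crit σ) :
    (Sset σ).Nonempty :=
  Finset.nonempty_iff_ne_empty.2 h

lemma not_crit_of_nonempty {σ : Finset (Finset (Fin n))} (h : (Sset σ).Nonempty) :
    ¬ Crit σ :=
  Finset.nonempty_iff_ne_empty.1 h

lemma mu_of_nonempty {σ : Finset (Finset (Fin n))} (h : (Sset σ).Nonempty) :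
    mu σ = 2 * (((Sset σ).min' h : Fin n) : ℕ)
      + (if ({(Sset σ).min' h} : Finset (Fin n)) ∈ σ then 0 else 1) := by
  unfold mu
  rw [dif_pos h]

lemma mu_le_min' {σ : Finset (Finset (Fin n))} (h : (Sset σ).Nonempty) :
    mu σ ≤ 2 * (((Sset σ).min' h : Fin n) : ℕ) + 1 := by
  rw [mu_of_nonempty h]
  split <;> omega

lemma mu_of_down {σ : Finset (Finset (Fin n))} (h : (Sset σ).Nonempty)
    (hs : ({(Sset σ).min' h} : Finset (Fin n)) ∈ σ) :
    mu σ = 2 * (((Sset σ).min' h : Fin n) : ℕ) := by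
  rw [mu_of_nonempty h, if_pos hs, add_zero]

lemma mu_of_up {σ : Finset (Finset (Fin n))} (h : (Sset σ).Nonempty)
    (hs : ({(Sset σ).min' h} : Finset (Fin n)) ∉ σ) :
    mu σ = 2 * (((Sset σ).min' h : Fin n) : ℕ) + 1 := by
  rw [mu_of_nonempty h, if_neg hs]

lemma up_nonempty {σ : Finset (Finset (Fin n))} (hu : Up σ) : (Sset σ).Nonempty :=
  hu.choose

lemma up_not_singleton {σ : Finset (Finset (Fin n))} (hu : Up σ) :
    ({(Sset σ).min' hu.choose} : Finset (Fin n)) ∉ σ :=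
  singleton_not_mem_of_not_mem_cov hu.choose_spec

lemma down_of_not_up {σ : Finset (Finset (Fin n))} (h : (Sset σ).Nonempty) (hnu : ¬ Up σ) :
    ({(Sset σ).min' h} : Finset (Fin n)) ∈ σ := by
  have hm := Finset.min'_mem _ h
  rw [mem_Sset] at hm
  rcases hm with h1 | h1
  · exact h1
  · exact absurd ⟨h, h1⟩ hnu

lemma min'_congr {s t : Finset (Fin n)} (hst : s = t) (hs : s.Nonempty) :
    s.min' hs = t.min' (hst ▸ hs) := by
  subst hst; rfl

lemma min'_le_of_subset {s t : Finset (Fin n)} (hs : s.Nonempty) (hst : s ⊆ t) :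
    t.min' (hs.mono hst) ≤ s.min' hs :=
  Finset.min'_subset hs hst

section UpF

variable {d : ℕ} (hn : 2 ≤ n) (σ : Faces n d) (hu : Up σ.1)

lemma upF_val : (upF hn σ hu).1
    = insert ({(Sset σ.1).min' hu.choose} : Finset (Fin n)) σ.1 := rfl

lemma Sset_upF : Sset (upF hn σ hu).1 = Sset σ.1 :=
  Sset_insert_singleton hu.choose_spec

lemma not_crit_upF : ¬ Crit (upF hn σ hu).1 := by
  apply not_crit_of_nonempty
  rw [Sset_upF]
  exact hu.choose

lemma min'_upF :
    (Sset (upF hn σ hu).1).min' (by rw [Sset_upF]; exact hu.choose)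
      = (Sset σ.1).min' hu.choose :=
  min'_congr (Sset_upF hn σ hu) _ ▸ rfl

lemma singleton_min'_mem_upF :
    ({(Sset σ.1).min' hu.choose} : Finset (Fin n)) ∈ (upF hn σ hu).1 :=
  Finset.mem_insert_self _ _

lemma mu_upF : mu (upF hn σ hu).1 = 2 * (((Sset σ.1).min' hu.choose : Fin n) : ℕ) := by
  have hne : (Sset (upF hn σ hu).1).Nonempty := by rw [Sset_upF]; exact hu.choose
  rw [mu_of_nonempty hne]
  have e : (Sset (upF hn σ hu).1).min' hne = (Sset σ.1).min' hu.choose := by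
    have := min'_congr (Sset_upF hn σ hu) hne
    exact this.symm ▸ rfl
  rw [e, if_pos (singleton_min'_mem_upF hn σ hu), add_zero]

lemma mu_up_eq : mu σ.1 = 2 * (((Sset σ.1).min' hu.choose : Fin n) : ℕ) + 1 :=
  mu_of_up hu.choose (up_not_singleton hu)

lemma pos_upF :
    pos (upF hn σ hu).1 ({(Sset σ.1).min' hu.choose} : Finset (Fin n)) = nk σ.1 := by
  have hmin : ∀ m' : Fin n, ({m'} : Finset (Fin n)) ∈ (upF hn σ hu).1 →
      (Sset σ.1).min' hu.choose ≤ m' := by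
    intro m' hm'
    rw [upF_val, Finset.mem_insert] at hm'
    rcases hm' with h1 | h1
    · exact le_of_eq (Finset.singleton_injective h1).symm
    · exact Finset.min'_le _ _ (mem_Sset.2 (Or.inl h1))
  unfold pos
  rw [filter_keyB_singleton (fun x hx => ((upF hn σ hu).2.1.1 x hx).1) hmin]
  rw [upF_val, Finset.filter_insert, if_neg (by simp)]
  rfl

lemma erase_upF :
    (upF hn σ hu).1.erase ({(Sset σ.1).min' hu.choose} : Finset (Fin n)) = σ.1 := by
  rw [upF_val]
  exact Finset.erase_insert (up_not_singleton hu)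

end UpF

end X7

namespace X7

variable {n : ℕ}

/-- Noncritical faces with measure `< k`. -/
def NCset (d k : ℕ) : Set (Faces n d) := {τ : Faces n d | ¬ Crit τ.1 ∧ mu τ.1 < k}

noncomputable def NCsupp (d k : ℕ) : Submodule ℤ (Cc n d) :=
  Finsupp.supported ℤ ℤ (NCset d k)

noncomputable def NCall (d : ℕ) : Submodule ℤ (Cc n d) :=
  Finsupp.supported ℤ ℤ {τ : Faces n d | ¬ Crit τ.1}

lemma NCsupp_mono {d : ℕ} {k k' : ℕ} (h : k ≤ k') : (NCsupp d k : Submodule ℤ (Cc n d)) ≤ NCsupp d k' :=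
  Finsupp.supported_mono (fun τ hτ => ⟨hτ.1, lt_of_lt_of_le hτ.2 h⟩)

lemma NCsupp_le_NCall {d k : ℕ} : (NCsupp d k : Submodule ℤ (Cc n d)) ≤ NCall d :=
  Finsupp.supported_mono (fun τ hτ => hτ.1)

lemma single_mem_NCsupp {d k : ℕ} {τ : Faces n d} (h1 : ¬ Crit τ.1) (h2 : mu τ.1 < k) :
    Finsupp.single τ (1 : ℤ) ∈ NCsupp d k :=
  Finsupp.single_mem_supported ℤ 1 ⟨h1, h2⟩

lemma single_mem_NCall {d : ℕ} {τ : Faces n d} (h1 : ¬ Crit τ.1) :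
    Finsupp.single τ (1 : ℤ) ∈ NCall d :=
  Finsupp.single_mem_supported ℤ 1 h1

lemma neg_one_sq_pow (k : ℕ) : ((-1 : ℤ) ^ k) * ((-1 : ℤ) ^ k) = 1 := by
  rw [← pow_add]
  exact Even.neg_one_pow ⟨k, rfl⟩

open scoped Classical in
lemma hh_single_up (hn : 2 ≤ n) {d : ℕ} (σ : Faces n d) (hu : Up σ.1) :
    hh hn d (Finsupp.single σ 1) = ((-1 : ℤ) ^ nk σ.1) • Finsupp.single (upF hn σ hu) 1 := by
  rw [hh_single, dif_pos hu]

open scoped Classical in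
lemma hh_single_not_up (hn : 2 ≤ n) {d : ℕ} (σ : Faces n d) (hnu : ¬ Up σ.1) :
    hh hn d (Finsupp.single σ 1) = 0 := by
  rw [hh_single, dif_neg hnu]

lemma hh_single_mem (hn : 2 ≤ n) {d : ℕ} (σ : Faces n d) (hu : Up σ.1) :
    hh hn d (Finsupp.single σ 1)
      ∈ NCsupp (d + 1) (2 * (((Sset σ.1).min' hu.choose : Fin n) : ℕ) + 1) := by
  rw [hh_single_up hn σ hu]
  exact Submodule.smul_mem _ _
    (single_mem_NCsupp (not_crit_upF hn σ hu) (by rw [mu_upF hn σ hu]; omega))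

lemma hh_single_mem_all (hn : 2 ≤ n) {d : ℕ} (σ : Faces n d) :
    hh hn d (Finsupp.single σ 1) ∈ NCall (d + 1) := by
  by_cases hu : Up σ.1
  · exact NCsupp_le_NCall (hh_single_mem hn σ hu)
  · rw [hh_single_not_up hn σ hu]
    exact Submodule.zero_mem _

/-- The key cancellation: `∂(h σ)` contains `σ` with coefficient `+1`. -/
lemma bdry_hh_single (hn : 2 ≤ n) {d : ℕ} (σ : Faces n d) (hu : Up σ.1) :
    bdry n d (hh hn d (Finsupp.single σ 1))
      = Finsupp.single σ 1 + ((-1 : ℤ) ^ nk σ.1) •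
          ∑ b ∈ σ.1, ((-1 : ℤ) ^ pos (upF hn σ hu).1 b) • δ d ((upF hn σ hu).1.erase b) := by
  rw [hh_single_up hn σ hu, map_smul, bdry_single' (upF hn σ hu)]
  rw [← Finset.add_sum_erase _ _ (singleton_min'_mem_upF hn σ hu)]
  rw [erase_upF hn σ hu, pos_upF hn σ hu]
  rw [smul_add, smul_smul, neg_one_sq_pow, one_smul]
  congr 1
  rw [δ_face σ.1 σ.2]

lemma hh_erase_mem (hn : 2 ≤ n) {d : ℕ} (σ : Faces n (d + 1)) {b : Finset (Fin n)}
    (hb : b ∈ σ.1) (bound : ℕ)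
    (hbound : ∀ hne : (Sset (σ.1.erase b)).Nonempty,
      Up (σ.1.erase b) → 2 * (((Sset (σ.1.erase b)).min' hne : Fin n) : ℕ) < bound) :
    hh hn d (δ d (σ.1.erase b)) ∈ NCsupp (d + 1) bound := by
  have hface : IsFace n (σ.1.erase b) := σ.2.1.erase b
  have hcard : (σ.1.erase b).card = d := by
    rw [Finset.card_erase_of_mem hb, σ.2.2]
    rfl
  rw [δ_face _ ⟨hface, hcard⟩]
  by_cases hu : Up (σ.1.erase b)
  · have h' : (Sset (σ.1.erase b)).Nonempty := hu.choose
    have mem := hh_single_mem hn (⟨σ.1.erase b, hface, hcard⟩ : Faces n d) hu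
    refine NCsupp_mono ?_ mem
    show 2 * (((Sset (σ.1.erase b)).min' h' : Fin n) : ℕ) + 1 ≤ bound
    have h2 := hbound h' hu
    omega
  · rw [hh_single_not_up hn (⟨σ.1.erase b, hface, hcard⟩ : Faces n d) hu]
    exact Submodule.zero_mem _

lemma hh_erase_mem_all (hn : 2 ≤ n) {d : ℕ} (σ : Faces n (d + 1)) {b : Finset (Fin n)}
    (hb : b ∈ σ.1) :
    hh hn d (δ d (σ.1.erase b)) ∈ NCall (d + 1) := by
  have hface : IsFace n (σ.1.erase b) := σ.2.1.erase b
  have hcard : (σ.1.erase b).card = d := by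
    rw [Finset.card_erase_of_mem hb, σ.2.2]
    rfl
  rw [δ_face _ ⟨hface, hcard⟩]
  exact hh_single_mem_all hn _

set_option maxHeartbeats 1000000 in
lemma up_residual_mem (hn : 2 ≤ n) {d : ℕ} (σ : Faces n d) (hu : Up σ.1)
    {b : Finset (Fin n)} (hb : b ∈ σ.1) :
    δ d ((upF hn σ hu).1.erase b) ∈ NCsupp d (mu σ.1) := by
  set m := (Sset σ.1).min' hu.choose with hm
  set τ := upF hn σ hu with hτ
  have hbτ : b ∈ τ.1 := by rw [hτ, upF_val]; exact Finset.mem_insert_of_mem hb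
  have hface : IsFace n (τ.1.erase b) := τ.2.1.erase b
  have hcard : (τ.1.erase b).card = d := by
    rw [Finset.card_erase_of_mem hbτ, τ.2.2]
    rfl
  rw [δ_face _ ⟨hface, hcard⟩]
  have hbm : b ≠ ({m} : Finset (Fin n)) := by
    intro h
    exact up_not_singleton hu (h ▸ hb)
  have hmem : ({m} : Finset (Fin n)) ∈ τ.1.erase b :=
    Finset.mem_erase.2 ⟨fun h => hbm h.symm, singleton_min'_mem_upF hn σ hu⟩
  have hmS : m ∈ Sset (τ.1.erase b) := mem_Sset.2 (Or.inl hmem)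
  have hne : (Sset (τ.1.erase b)).Nonempty := ⟨m, hmS⟩
  have hminle : (Sset (τ.1.erase b)).min' hne ≤ m := Finset.min'_le _ _ hmS
  apply single_mem_NCsupp (not_crit_of_nonempty hne)
  show mu (τ.1.erase b) < mu σ.1
  rw [mu_up_eq σ hu]
  by_cases hcase : (Sset (τ.1.erase b)).min' hne = m
  · rw [mu_of_down hne (by rw [hcase]; exact hmem), hcase]
    omega
  · have hlt : (Sset (τ.1.erase b)).min' hne < m := lt_of_le_of_ne hminle hcase
    have hv : (((Sset (τ.1.erase b)).min' hne : Fin n) : ℕ) < ((m : Fin n) : ℕ) := hlt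
    have := mu_le_min' hne
    omega

lemma down_main_term (hn : 2 ≤ n) {d : ℕ} (σ : Faces n (d + 1))
    (h : (Sset σ.1).Nonempty)
    (hs : ({(Sset σ.1).min' h} : Finset (Fin n)) ∈ σ.1) :
    ((-1 : ℤ) ^ pos σ.1 ({(Sset σ.1).min' h} : Finset (Fin n))) •
        hh hn d (δ d (σ.1.erase ({(Sset σ.1).min' h} : Finset (Fin n))))
      = Finsupp.single σ 1 := by
  set m := (Sset σ.1).min' h with hm
  have hface : IsFace n (σ.1.erase ({m} : Finset (Fin n))) := σ.2.1.erase _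
  have hcard : (σ.1.erase ({m} : Finset (Fin n))).card = d := by
    rw [Finset.card_erase_of_mem hs, σ.2.2]
    rfl
  set ρ : Faces n d := ⟨σ.1.erase ({m} : Finset (Fin n)), hface, hcard⟩ with hρ
  have hSρ : Sset ρ.1 = Sset σ.1 := by
    rw [hρ]
    rw [Sset_erase σ.2.1 hs]
    apply Finset.union_eq_left.2
    intro x hx
    rw [Finset.mem_singleton] at hx
    subst hx
    exact Finset.min'_mem _ h
  have hneρ : (Sset ρ.1).Nonempty := by rw [hSρ]; exact h
  have hmin_eq : ∀ hx : (Sset ρ.1).Nonempty, (Sset ρ.1).min' hx = m := by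
    intro hx
    rw [min'_congr hSρ hx]
  have hmcov : m ∉ cov ρ.1 :=
    not_mem_cov_erase σ.2.1 hs (Finset.mem_singleton_self m)
  have hu' : Up ρ.1 := ⟨hneρ, by rw [hmin_eq]; exact hmcov⟩
  rw [δ_face _ ⟨hface, hcard⟩, hh_single_up hn ρ hu']
  have hupF : upF hn ρ hu' = σ := by
    apply Subtype.ext
    rw [upF_val, hmin_eq hu'.choose]
    exact Finset.insert_erase hs
  rw [hupF]
  have hnkρ : nk ρ.1 = nk σ.1 := nk_erase_singleton σ.1 m
  have hpos : pos σ.1 ({m} : Finset (Fin n)) = nk σ.1 := by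
    unfold pos
    rw [filter_keyB_singleton (fun x hx => (σ.2.1.1 x hx).1)
      (fun m' hm' => Finset.min'_le _ _ (mem_Sset.2 (Or.inl hm')))]
    rfl
  rw [smul_smul, hnkρ, hpos, neg_one_sq_pow, one_smul]

end X7

namespace X7

variable {n : ℕ}

lemma PP_zero_apply (hn : 2 ≤ n) (x : Cc n 0) :
    PP hn 0 x = x - bdry n 0 (hh hn 0 x) := rfl

lemma PP_succ_apply (hn : 2 ≤ n) (d : ℕ) (x : Cc n (d + 1)) :
    PP hn (d + 1) x = x - bdry n (d + 1) (hh hn (d + 1) x) - hh hn d (bdry n d x) := rfl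

lemma hh_sum_rw (hn : 2 ≤ n) {d : ℕ} (σ : Faces n (d + 1)) :
    hh hn d (bdry n d (Finsupp.single σ 1))
      = ∑ b ∈ σ.1, ((-1 : ℤ) ^ pos σ.1 b) • hh hn d (δ d (σ.1.erase b)) := by
  rw [bdry_single', map_sum]
  exact Finset.sum_congr rfl fun b _ => map_smul _ _ _

lemma L1 (hn : 2 ≤ n) (d : ℕ) (σ : Faces n d) (hnc : ¬ Crit σ.1) :
    PP hn d (Finsupp.single σ 1) ∈ NCsupp d (mu σ.1) := by
  cases d with
  | zero =>
    have hσ : σ.1 = ∅ := Finset.card_eq_zero.1 σ.2.2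
    have hcov : cov σ.1 = ∅ := by rw [hσ]; rfl
    have hne : (Sset σ.1).Nonempty := Sset_nonempty_of_not_crit hnc
    have hu : Up σ.1 := ⟨hne, by rw [hcov]; exact Finset.notMem_empty _⟩
    rw [PP_zero_apply, bdry_hh_single hn σ hu]
    have hsum : ∑ b ∈ σ.1, ((-1 : ℤ) ^ pos (upF hn σ hu).1 b) •
        δ 0 ((upF hn σ hu).1.erase b) = 0 := by
      rw [hσ, Finset.sum_empty]
    rw [hsum, smul_zero, add_zero, sub_self]
    exact Submodule.zero_mem _
  | succ d =>
    by_cases hu : Up σ.1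
    · rw [PP_succ_apply, bdry_hh_single hn σ hu, hh_sum_rw hn σ]
      have habel : ∀ x a b : Cc n (d + 1), x - (x + a) - b = -a - b := by
        intros; abel
      rw [habel]
      apply Submodule.sub_mem
      · apply Submodule.neg_mem
        apply Submodule.smul_mem
        apply Submodule.sum_mem
        intro b hb
        exact Submodule.smul_mem _ _ (up_residual_mem hn σ hu hb)
      · apply Submodule.sum_mem
        intro b hb
        apply Submodule.smul_mem
        apply hh_erase_mem hn σ hb (mu σ.1)
        intro hne' hup
        have hsub : Sset σ.1 ⊆ Sset (σ.1.erase b) := Sset_subset_erase σ.2.1 hb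
        have hle : (Sset (σ.1.erase b)).min' hne' ≤ (Sset σ.1).min' hu.choose :=
          Finset.min'_le _ _ (hsub (Finset.min'_mem _ hu.choose))
        rw [mu_up_eq σ hu]
        have hv : (((Sset (σ.1.erase b)).min' hne' : Fin n) : ℕ)
            ≤ (((Sset σ.1).min' hu.choose : Fin n) : ℕ) := hle
        omega
    · have hne : (Sset σ.1).Nonempty := Sset_nonempty_of_not_crit hnc
      have hs := down_of_not_up hne hu
      rw [PP_succ_apply, hh_single_not_up hn σ hu, map_zero, hh_sum_rw hn σ]
      rw [← Finset.add_sum_erase _ _ hs, down_main_term hn σ hne hs]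
      have habel : ∀ x b : Cc n (d + 1), x - 0 - (x + b) = -b := by
        intros; abel
      rw [habel]
      apply Submodule.neg_mem
      apply Submodule.sum_mem
      intro b hb
      have hbσ : b ∈ σ.1 := Finset.mem_of_mem_erase hb
      have hbm : b ≠ ({(Sset σ.1).min' hne} : Finset (Fin n)) := Finset.ne_of_mem_erase hb
      apply Submodule.smul_mem
      apply hh_erase_mem hn σ hbσ (mu σ.1)
      intro hne' hup
      rw [mu_of_down hne hs]
      have hmem : ({(Sset σ.1).min' hne} : Finset (Fin n)) ∈ σ.1.erase b :=
        Finset.mem_erase.2 ⟨fun h => hbm h.symm, hs⟩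
      have hmS : (Sset σ.1).min' hne ∈ Sset (σ.1.erase b) := mem_Sset.2 (Or.inl hmem)
      have hle : (Sset (σ.1.erase b)).min' hne' ≤ (Sset σ.1).min' hne :=
        Finset.min'_le _ _ hmS
      have hlt : (Sset (σ.1.erase b)).min' hne' < (Sset σ.1).min' hne := by
        rcases lt_or_eq_of_le hle with h | h
        · exact h
        · exfalso
          have hcov : (Sset σ.1).min' hne ∈ cov (σ.1.erase b) :=
            mem_cov.2 ⟨_, hmem, Finset.mem_singleton_self _⟩
          have := hup.choose_spec
          rw [show (Sset (σ.1.erase b)).min' hup.choose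
              = (Sset (σ.1.erase b)).min' hne' from rfl, h] at this
          exact this hcov
      have hv : (((Sset (σ.1.erase b)).min' hne' : Fin n) : ℕ)
          < (((Sset σ.1).min' hne : Fin n) : ℕ) := hlt
      omega

lemma L2 (hn : 2 ≤ n) (d : ℕ) (κ : Faces n d) (hc : Crit κ.1) :
    PP hn d (Finsupp.single κ 1) - Finsupp.single κ 1 ∈ NCall d := by
  have hnu : ¬ Up κ.1 := fun hu => (Finset.nonempty_iff_ne_empty.1 hu.choose) hc
  cases d with
  | zero =>
    rw [PP_zero_apply, hh_single_not_up hn κ hnu, map_zero, sub_zero, sub_self]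
    exact Submodule.zero_mem _
  | succ d =>
    rw [PP_succ_apply, hh_single_not_up hn κ hnu, map_zero, sub_zero,
      hh_sum_rw hn κ]
    have habel : ∀ x y : Cc n (d + 1), x - y - x = -y := by intros; abel
    rw [habel]
    apply Submodule.neg_mem
    apply Submodule.sum_mem
    intro b hb
    exact Submodule.smul_mem _ _ (hh_erase_mem_all hn κ hb)

end X7

namespace X7

variable {n : ℕ}

lemma bdry_bdry_apply (q : ℕ) (y : Cc n (q + 1 + 1)) :
    bdry n q (bdry n (q + 1) y) = 0 := by
  have := bdry_bdry (n := n) q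
  have h2 := DFunLike.congr_fun this y
  simpa using h2

lemma bdry_PP_apply (hn : 2 ≤ n) (d : ℕ) (x : Cc n (d + 1)) :
    bdry n d (PP hn (d + 1) x) = PP hn d (bdry n d x) := by
  cases d with
  | zero =>
    rw [PP_succ_apply, PP_zero_apply, map_sub, map_sub, bdry_bdry_apply, sub_zero]
  | succ e =>
    rw [PP_succ_apply, PP_succ_apply, map_sub, map_sub, bdry_bdry_apply, sub_zero,
      bdry_bdry_apply, map_zero, sub_zero]

lemma NCsupp_zero (d : ℕ) : (NCsupp d 0 : Submodule ℤ (Cc n d)) = ⊥ := by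
  have h : (NCset d 0 : Set (Faces n d)) = ∅ := by
    ext τ
    simp only [NCset, Set.mem_setOf_eq, Set.mem_empty_iff_false, iff_false]
    rintro ⟨-, h2⟩
    omega
  rw [NCsupp, h]
  exact Finsupp.supported_empty

lemma mem_NCsupp_of_NCall {d : ℕ} {x : Cc n d} (hx : x ∈ NCall d) :
    x ∈ NCsupp d (2 * n + 1) := by
  rw [NCall, Finsupp.mem_supported] at hx
  rw [NCsupp, Finsupp.mem_supported]
  intro τ hτ
  exact ⟨hx hτ, mu_lt τ.1⟩

lemma PP_mem_NCsupp (hn : 2 ≤ n) (d k : ℕ) {x : Cc n d} (hx : x ∈ NCsupp d (k + 1)) :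
    PP hn d x ∈ NCsupp d k := by
  rw [NCsupp, Finsupp.supported_eq_span_single] at hx
  refine Submodule.span_induction ?_ ?_ ?_ ?_ hx
  · rintro y ⟨τ, hτ, rfl⟩
    have h1 := L1 hn d τ hτ.1
    refine NCsupp_mono ?_ h1
    have := hτ.2
    omega
  · rw [map_zero]; exact Submodule.zero_mem _
  · intro y z _ _ hy hz
    rw [map_add]; exact Submodule.add_mem _ hy hz
  · intro a y _ hy
    rw [map_smul]; exact Submodule.smul_mem _ _ hy

lemma PPpow_zero (hn : 2 ≤ n) (d : ℕ) {x : Cc n d} (hx : x ∈ NCall d) :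
    ((PP hn d) ^ (2 * n + 1)) x = 0 := by
  have key : ∀ (k : ℕ) (y : Cc n d), y ∈ NCsupp d k → ((PP hn d) ^ k) y = 0 := by
    intro k
    induction k with
    | zero =>
      intro y hy
      rw [NCsupp_zero, Submodule.mem_bot] at hy
      subst hy
      simp
    | succ k ih =>
      intro y hy
      have h1 : ((PP hn d) ^ (k + 1)) y = ((PP hn d) ^ k) (PP hn d y) := by
        rw [pow_succ, Module.End.mul_apply]
      rw [h1]
      exact ih _ (PP_mem_NCsupp hn d k hy)
  exact key _ _ (mem_NCsupp_of_NCall hx)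

/-- The critical faces. -/
def CritF (d : ℕ) := {τ : Faces n d // Crit τ.1}

/-- Projection of a chain onto its coordinates at critical faces. -/
noncomputable def πc (d : ℕ) : Cc n d →ₗ[ℤ] ((CritF (n := n) d) →₀ ℤ) :=
  Finsupp.lcomapDomain Subtype.val Subtype.val_injective

lemma πc_apply (d : ℕ) (x : Cc n d) (τ : CritF (n := n) d) : πc d x τ = x τ.1 := rfl

lemma πc_single_crit {d : ℕ} (τ : CritF (n := n) d) :
    πc d (Finsupp.single τ.1 (1 : ℤ)) = Finsupp.single τ 1 := by
  ext a
  rw [πc_apply]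
  rcases eq_or_ne a τ with rfl | hne
  · simp
  · have h1 : τ.1 ≠ a.1 := fun h => hne (Subtype.ext h).symm
    rw [Finsupp.single_eq_of_ne h1.symm, Finsupp.single_eq_of_ne hne]

lemma πc_single_noncrit {d : ℕ} {τ : Faces n d} (h : ¬ Crit τ.1) :
    πc d (Finsupp.single τ (1 : ℤ)) = 0 := by
  ext a
  rw [πc_apply]
  have h1 : τ ≠ a.1 := fun heq => h (by rw [heq]; exact a.2)
  rw [Finsupp.single_eq_of_ne h1.symm]
  simp

lemma πc_NCall {d : ℕ} {x : Cc n d} (hx : x ∈ NCall d) : πc d x = 0 := by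
  rw [NCall, Finsupp.supported_eq_span_single] at hx
  refine Submodule.span_induction ?_ ?_ ?_ ?_ hx
  · rintro y ⟨τ, hτ, rfl⟩
    exact πc_single_noncrit hτ
  · exact map_zero _
  · intro y z _ _ hy hz
    rw [map_add, hy, hz, add_zero]
  · intro a y _ hy
    rw [map_smul, hy, smul_zero]

lemma mem_NCall_of_πc {d : ℕ} {x : Cc n d} (hx : πc d x = 0) : x ∈ NCall d := by
  rw [NCall, Finsupp.mem_supported]
  intro τ hτ
  by_contra hcrit
  rw [Set.mem_setOf_eq, not_not] at hcrit
  have h1 : πc d x ⟨τ, hcrit⟩ = x τ := rfl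
  rw [hx] at h1
  exact Finsupp.mem_support_iff.1 hτ h1.symm

lemma bdry_mem_NCall (d : ℕ) (y : Cc n (d + 1)) : bdry n d y ∈ NCall d := by
  induction y using Finsupp.induction_linear with
  | zero => rw [map_zero]; exact Submodule.zero_mem _
  | add f g hf hg => rw [map_add]; exact Submodule.add_mem _ hf hg
  | single σ r =>
    have h1 : (Finsupp.single σ r : Cc n (d + 1)) = r • Finsupp.single σ 1 := by
      rw [Finsupp.smul_single, smul_eq_mul, mul_one]
    rw [h1, map_smul]
    apply Submodule.smul_mem
    rw [bdry_single']
    apply Submodule.sum_mem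
    intro b hb
    apply Submodule.smul_mem
    have hface : IsFace n (σ.1.erase b) := σ.2.1.erase b
    have hcard : (σ.1.erase b).card = d := by
      rw [Finset.card_erase_of_mem hb, σ.2.2]
      rfl
    rw [δ_face _ ⟨hface, hcard⟩]
    apply single_mem_NCall
    apply not_crit_of_nonempty
    have hbne : b.Nonempty := (σ.2.1.1 b hb).1
    obtain ⟨i, hi⟩ := hbne
    show (Sset (σ.1.erase b)).Nonempty
    refine ⟨i, ?_⟩
    rw [Sset_erase σ.2.1 hb]
    exact Finset.mem_union_right _ hi

lemma πc_PP (hn : 2 ≤ n) (d : ℕ) (x : Cc n d) : πc d (PP hn d x) = πc d x := by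
  induction x using Finsupp.induction_linear with
  | zero => rw [map_zero, map_zero]
  | add f g hf hg => rw [map_add, map_add, map_add, hf, hg]
  | single σ r =>
    have h1 : (Finsupp.single σ r : Cc n d) = r • Finsupp.single σ 1 := by
      rw [Finsupp.smul_single, smul_eq_mul, mul_one]
    rw [h1, map_smul, map_smul, map_smul]
    congr 1
    by_cases hc : Crit σ.1
    · have h2 := L2 hn d σ hc
      have h3 : PP hn d (Finsupp.single σ 1)
          = Finsupp.single σ 1 + (PP hn d (Finsupp.single σ 1) - Finsupp.single σ 1) := by
        abel
      rw [h3, map_add, πc_NCall h2, add_zero]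
    · have h1' := L1 hn d σ hc
      rw [πc_NCall (NCsupp_le_NCall h1'), πc_single_noncrit hc]

lemma πc_PPpow (hn : 2 ≤ n) (d k : ℕ) (x : Cc n d) :
    πc d (((PP hn d) ^ k) x) = πc d x := by
  induction k generalizing x with
  | zero => simp
  | succ k ih =>
    rw [pow_succ, Module.End.mul_apply, ih, πc_PP]

end X7

namespace X7

variable {n : ℕ}

lemma bdry_PPpow_apply (hn : 2 ≤ n) (d k : ℕ) (x : Cc n (d + 1)) :
    bdry n d (((PP hn (d + 1)) ^ k) x) = ((PP hn d) ^ k) (bdry n d x) := by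
  induction k generalizing x with
  | zero => simp
  | succ k ih =>
    rw [pow_succ, Module.End.mul_apply, ih, bdry_PP_apply, pow_succ, Module.End.mul_apply]

/-- The geometric sum of the flow map. -/
noncomputable def SS (hn : 2 ≤ n) (d : ℕ) : Cc n d →ₗ[ℤ] Cc n d :=
  ∑ k ∈ Finset.range (2 * n + 1), (PP hn d) ^ k

lemma bdry_SS_apply (hn : 2 ≤ n) (d : ℕ) (x : Cc n (d + 1)) :
    bdry n d (SS hn (d + 1) x) = SS hn d (bdry n d x) := by
  rw [SS, SS, LinearMap.sum_apply, map_sum, LinearMap.sum_apply]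
  exact Finset.sum_congr rfl fun k _ => bdry_PPpow_apply hn d k x

lemma geom_identity (hn : 2 ≤ n) (d : ℕ) (x : Cc n d) :
    SS hn d x - PP hn d (SS hn d x) = x - ((PP hn d) ^ (2 * n + 1)) x := by
  have h2 : ((PP hn d - 1) * ∑ k ∈ Finset.range (2 * n + 1), (PP hn d) ^ k)
      = (PP hn d) ^ (2 * n + 1) - 1 := mul_geom_sum _ _
  have h3 := DFunLike.congr_fun h2 x
  rw [Module.End.mul_apply] at h3
  have hS : (∑ k ∈ Finset.range (2 * n + 1), (PP hn d) ^ k) x = SS hn d x := rfl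
  rw [hS, LinearMap.sub_apply, LinearMap.sub_apply, Module.End.one_apply,
    Module.End.one_apply] at h3
  have := congrArg Neg.neg h3
  simpa [neg_sub] using this

lemma homotopy_identity (hn : 2 ≤ n) (d : ℕ) (x : Cc n (d + 1)) :
    x - ((PP hn (d + 1)) ^ (2 * n + 1)) x
      = bdry n (d + 1) (hh hn (d + 1) (SS hn (d + 1) x))
        + hh hn d (bdry n d (SS hn (d + 1) x)) := by
  have h1 : ∀ y : Cc n (d + 1),
      bdry n (d + 1) (hh hn (d + 1) y) + hh hn d (bdry n d y) = y - PP hn (d + 1) y := by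
    intro y
    rw [PP_succ_apply]
    abel
  rw [h1, geom_identity]

lemma bdry_QQ (hn : 2 ≤ n) (d : ℕ) (y : Cc n (d + 1)) :
    bdry n d (((PP hn (d + 1)) ^ (2 * n + 1)) y) = 0 := by
  rw [bdry_PPpow_apply]
  exact PPpow_zero hn d (bdry_mem_NCall d y)

/-- The inclusion of critical chains. -/
noncomputable def ιc (d : ℕ) : ((CritF (n := n) d) →₀ ℤ) →ₗ[ℤ] Cc n d :=
  Finsupp.lmapDomain ℤ ℤ Subtype.val

lemma πc_ιc (d : ℕ) (y : (CritF (n := n) d) →₀ ℤ) : πc d (ιc d y) = y := by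
  ext a
  rw [πc_apply, ιc]
  exact Finsupp.mapDomain_apply Subtype.val_injective y a

end X7

namespace X7

variable {n : ℕ}

/-- The index type of `betaP`. -/
def betaSub (n q : ℕ) := {σ : Finset (Finset (Fin n)) //
    σ.card = q + 1 ∧ (∀ x ∈ σ, 2 ≤ x.card ∧ x ≠ Finset.univ) ∧
    ((σ : Set (Finset (Fin n))).Pairwise fun a b => Disjoint a b) ∧
    σ.sup id = Finset.univ}

instance (n q : ℕ) : Finite (betaSub n q) := Subtype.finite

lemma crit_iff {σ : Finset (Finset (Fin n))} (hf : IsFace n σ) :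
    Crit σ ↔ (∀ x ∈ σ, 2 ≤ x.card) ∧ σ.sup id = Finset.univ := by
  constructor
  · intro hc
    have hS : ∀ m : Fin n, m ∉ Sset σ := by
      intro m hm
      rw [Crit] at hc
      rw [hc] at hm
      exact absurd hm (Finset.notMem_empty m)
    constructor
    · intro x hx
      have h1 : x.Nonempty := (hf.1 x hx).1
      by_contra h2
      have hx1 : x.card = 1 := by
        have := Finset.card_pos.2 h1
        omega
      obtain ⟨m, rfl⟩ := Finset.card_eq_one.1 hx1
      exact hS m (mem_Sset.2 (Or.inl hx))
    · apply Finset.eq_univ_iff_forall.2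
      intro m
      by_contra h2
      exact hS m (mem_Sset.2 (Or.inr h2))
  · rintro ⟨h1, h2⟩
    rw [Crit]
    apply Finset.eq_empty_iff_forall_notMem.2
    intro m hm
    rcases mem_Sset.1 hm with h3 | h3
    · have := h1 _ h3
      simp at this
    · exact h3 (by rw [show cov σ = σ.sup id from rfl, h2]; exact Finset.mem_univ m)

def critEquiv (q : ℕ) : CritF (n := n) (q + 1) ≃ betaSub n q where
  toFun τ := ⟨τ.1.1, τ.1.2.2,
    fun x hx => ⟨((crit_iff τ.1.2.1).1 τ.2).1 x hx, (τ.1.2.1.1 x hx).2⟩,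
    τ.1.2.1.2, ((crit_iff τ.1.2.1).1 τ.2).2⟩
  invFun σ :=
    ⟨⟨σ.1,
      ⟨fun x hx => ⟨Finset.card_pos.1 (by have := (σ.2.2.1 x hx).1; omega),
          (σ.2.2.1 x hx).2⟩, σ.2.2.2.1⟩, σ.2.1⟩,
      (crit_iff ⟨fun x hx => ⟨Finset.card_pos.1 (by have := (σ.2.2.1 x hx).1; omega),
          (σ.2.2.1 x hx).2⟩, σ.2.2.2.1⟩).2
        ⟨fun x hx => (σ.2.2.1 x hx).1, σ.2.2.2.2⟩⟩
  left_inv τ := by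
    apply Subtype.ext
    apply Subtype.ext
    rfl
  right_inv σ := by
    apply Subtype.ext
    rfl

end X7

/-- For `n ≥ 2` and `0 ≤ q ≤ n-1`, the `q`-th reduced integral homology of `X(n)` is
free abelian of rank `β(n,q)`. -/
theorem stmt7 (n q : ℕ) (hn : 2 ≤ n) (hq : q ≤ n - 1) :
    Nonempty (Hred n q ≃ₗ[ℤ] (Fin (betaP n q) →₀ ℤ)) := by
  classical
  let g : LinearMap.ker (bdry n q) →ₗ[ℤ] ((X7.CritF (n := n) (q + 1)) →₀ ℤ) :=
    (X7.πc (q + 1)).comp (LinearMap.ker (bdry n q)).subtype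
  have hg_apply : ∀ x : LinearMap.ker (bdry n q), g x = X7.πc (q + 1) x.1 := fun x => rfl
  have hsurj : Function.Surjective g := by
    intro y
    have hkery : bdry n q (((X7.PP hn (q + 1)) ^ (2 * n + 1)) (X7.ιc (q + 1) y)) = 0 :=
      X7.bdry_QQ hn q _
    refine ⟨⟨((X7.PP hn (q + 1)) ^ (2 * n + 1)) (X7.ιc (q + 1) y),
      LinearMap.mem_ker.2 hkery⟩, ?_⟩
    rw [hg_apply, X7.πc_PPpow hn (q + 1) (2 * n + 1), X7.πc_ιc (q + 1) y]
  have hker : LinearMap.ker g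
      = Submodule.comap (LinearMap.ker (bdry n q)).subtype
          (LinearMap.range (bdry n (q + 1))) := by
    ext x
    rw [LinearMap.mem_ker, hg_apply, Submodule.mem_comap, LinearMap.mem_range]
    constructor
    · intro hx
      have h1 : (x.1 : Cc n (q + 1)) ∈ X7.NCall (q + 1) := X7.mem_NCall_of_πc hx
      have h2 : ((X7.PP hn (q + 1)) ^ (2 * n + 1)) x.1 = 0 := X7.PPpow_zero hn (q + 1) h1
      have h3 := X7.homotopy_identity hn q x.1
      rw [h2, sub_zero] at h3
      have h4 : bdry n q (X7.SS hn (q + 1) x.1) = 0 := by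
        rw [X7.bdry_SS_apply]
        have hx0 : bdry n q x.1 = 0 := x.2
        rw [hx0, map_zero]
      rw [h4, map_zero, add_zero] at h3
      exact ⟨X7.hh hn (q + 1) (X7.SS hn (q + 1) x.1), h3.symm⟩
    · rintro ⟨z, hz⟩
      have h1 := X7.bdry_mem_NCall (q + 1) z
      rw [hz] at h1
      exact X7.πc_NCall h1
  have e1 : (LinearMap.ker (bdry n q) ⧸
      Submodule.comap (LinearMap.ker (bdry n q)).subtype (LinearMap.range (bdry n (q + 1))))
      ≃ₗ[ℤ] ((X7.CritF (n := n) (q + 1)) →₀ ℤ) :=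
    (Submodule.quotEquivOfEq _ _ hker.symm).trans (g.quotKerEquivOfSurjective hsurj)
  have eFin : X7.CritF (n := n) (q + 1) ≃ Fin (betaP n q) :=
    (X7.critEquiv q).trans (Finite.equivFin _)
  exact ⟨e1.trans (Finsupp.domLCongr eFin : _ ≃ₗ[ℤ] _)⟩
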